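/- Let F(b) be the feasible set of a linear inequality system in ℝⁿ and S(b) the set of Pareto-nondominated points of F(b) with respect to objectives c₁,…,c_q. If S(b) is nonempty, then for every x₀ ∈ F(b) \ S(b) there exists x̃₀ ∈ S(b) with ⟨cᵢ, x̃₀⟩ ≤ ⟨cᵢ, x₀⟩ for every i = 1,…,q. -/

import Mathlib

/-- The dot product on `ℝⁿ`. -/
def dot {n : ℕ} (a x : Fin n → ℝ) : ℝ := ∑ i, a i * x i


/-- Generalized feasibility over an arbitrary index type. -/
def GFeas {n : ℕ} {I : Type} (a : I → Fin n → ℝ) (b : I → ℝ) (x : Fin n → ℝ) : Prop :=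
  ∀ t, dot (a t) x ≤ b t

lemma dot_cons {n : ℕ} (v : Fin (n+1) → ℝ) (s : ℝ) (y : Fin n → ℝ) :
    dot v (Fin.cons s y) = v 0 * s + dot (fun i => v i.succ) y := by
  simp [dot, Fin.sum_univ_succ]

lemma dot_zero_left {n : ℕ} (y : Fin n → ℝ) : dot (fun _ => (0:ℝ)) y = 0 := by
  simp [dot]

lemma dot_comb {n : ℕ} (p q : ℝ) (v w y : Fin n → ℝ) :
    dot (fun i => p * v i - q * w i) y = p * dot v y - q * dot w y := by
  simp [dot, Finset.mul_sum, ← Finset.sum_sub_distrib]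
  congr 1; ext i; ring

lemma sum_single {I : Type} [Fintype I] [DecidableEq I] (c : ℝ) (t : I) (f : I → ℝ) :
    ∑ i, (if i = t then c else 0) * f i = c * f t := by
  simp [ite_mul]

/-- Fourier–Motzkin: eliminate the first variable, with right-hand sides tracked
as fixed linear combinations of the original right-hand sides. -/
lemma fm {n : ℕ} {I : Type} [Fintype I] (a : I → Fin (n+1) → ℝ) :
    ∃ (J : Type) (_ : Fintype J) (a' : J → Fin n → ℝ) (u : J → I → ℝ),
      ∀ (b : I → ℝ) (y : Fin n → ℝ),
        (∃ s, GFeas a b (Fin.cons s y)) ↔ GFeas a' (fun j => ∑ i, u j i * b i) y := by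
  classical
  set α : I → ℝ := fun t => a t 0 with hα
  set g : I → Fin n → ℝ := fun t i => a t i.succ with hg
  refine ⟨I ⊕ I × I, inferInstance,
    Sum.elim (fun t => if α t = 0 then g t else fun _ => 0)
      (fun tw => if α tw.1 < 0 ∧ 0 < α tw.2
        then (fun i => α tw.2 * g tw.1 i - α tw.1 * g tw.2 i) else fun _ => 0),
    Sum.elim (fun t i => if α t = 0 ∧ i = t then 1 else 0)
      (fun tw i => if α tw.1 < 0 ∧ 0 < α tw.2
        then (if i = tw.1 then α tw.2 else 0) + (if i = tw.2 then -(α tw.1) else 0)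
        else 0), ?_⟩
  intro b y
  constructor
  · rintro ⟨s, hs⟩ j
    have key : ∀ t, α t * s + dot (g t) y ≤ b t := by
      intro t; have := hs t; rwa [dot_cons] at this
    rcases j with t | ⟨t, w⟩
    · by_cases h0 : α t = 0
      · simpa [h0, sum_single] using key t
      · simp [h0, dot_zero_left, ite_mul]
    · by_cases hc : α t < 0 ∧ 0 < α w
      · have ht := key t; have hw := key w
        simp only [Sum.elim_inr, if_pos hc]
        rw [dot_comb]
        have hsum : ∑ i, ((if i = t then α w else 0) + (if i = w then -(α t) else 0)) * b i
            = α w * b t + -(α t) * b w := by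
          simp only [add_mul, Finset.sum_add_distrib, sum_single]
        rw [hsum]
        nlinarith [mul_le_mul_of_nonneg_left ht hc.2.le,
          mul_le_mul_of_nonneg_left hw (neg_nonneg.2 hc.1.le)]
      · simp [hc, dot_zero_left, ite_mul]
  · intro h
    set N : Finset I := Finset.univ.filter (fun t => α t < 0) with hN
    set P : Finset I := Finset.univ.filter (fun t => 0 < α t) with hP
    set lo : I → ℝ := fun t => (b t - dot (g t) y) / α t with hlo
    set s : ℝ := if hn : N.Nonempty then N.sup' hn lo
      else if hp : P.Nonempty then P.inf' hp lo else 0 with hsdef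
    refine ⟨s, fun t => ?_⟩
    rw [dot_cons]
    show α t * s + dot (g t) y ≤ b t
    rcases lt_trichotomy (α t) 0 with h1 | h1 | h1
    · -- lower-bound constraint: s ≥ lo t
      have hn : N.Nonempty := ⟨t, by simp [hN, h1]⟩
      have hst : lo t ≤ s := by
        rw [hsdef, dif_pos hn]
        exact Finset.le_sup' lo (by simp [hN, h1])
      have : α t * s ≤ α t * lo t := mul_le_mul_of_nonpos_left hst h1.le
      have heq : α t * lo t = b t - dot (g t) y := by
        show α t * ((b t - dot (g t) y) / α t) = _
        exact mul_div_cancel₀ _ h1.ne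
      linarith
    · -- α t = 0
      have := h (Sum.inl t)
      simp only [Sum.elim_inl, if_pos h1] at this
      have hb : ∑ i, (if α t = 0 ∧ i = t then (1:ℝ) else 0) * b i = b t := by
        simpa [h1] using sum_single (I := I) 1 t b
      rw [hb] at this
      rw [h1]; linarith
    · -- upper-bound constraint: s ≤ lo t
      have hst : s ≤ lo t := by
        rw [hsdef]
        by_cases hn : N.Nonempty
        · rw [dif_pos hn]
          refine Finset.sup'_le hn lo (fun v hv => ?_)
          have hv' : α v < 0 := by simpa [hN] using hv
          -- combined constraint for the pair (v, t)
          have hcomb := h (Sum.inr (v, t))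
          simp only [Sum.elim_inr, if_pos (And.intro hv' h1)] at hcomb
          rw [dot_comb] at hcomb
          have hsum : ∑ i, ((if i = v then α t else 0) + (if i = t then -(α v) else 0)) * b i
              = α t * b v + -(α v) * b t := by
            simp only [add_mul, Finset.sum_add_distrib, sum_single]
          rw [hsum] at hcomb
          rw [hlo]
          rw [le_div_iff₀ h1]
          have hL : α v * ((b v - dot (g v) y) / α v) = b v - dot (g v) y := by
            rw [mul_comm, div_mul_cancel₀ _ hv'.ne]
          have h3 : α t * (α v * ((b v - dot (g v) y) / α v)) = α t * (b v - dot (g v) y) := by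
            rw [hL]
          nlinarith [hcomb, h3, neg_pos.2 hv']
        · rw [dif_neg hn]
          have hp : P.Nonempty := ⟨t, by simp [hP, h1]⟩
          rw [dif_pos hp]
          exact Finset.inf'_le lo (by simp [hP, h1])
      have : α t * s ≤ α t * lo t := mul_le_mul_of_nonneg_left hst h1.le
      have heq : α t * lo t = b t - dot (g t) y := by
        show α t * ((b t - dot (g t) y) / α t) = _
        exact mul_div_cancel₀ _ h1.ne'
      linarith

/-- Eliminate all variables except the distinguished last one. -/
lemma elimAll : ∀ (n : ℕ) {I : Type} [Fintype I] (a : I → Fin (n+1) → ℝ),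
    ∃ (J : Type) (_ : Fintype J) (α : J → ℝ) (u : J → I → ℝ),
      ∀ (b : I → ℝ) (t : ℝ),
        (∃ x : Fin n → ℝ, GFeas a b (Fin.snoc x t)) ↔ ∀ j, α j * t ≤ ∑ i, u j i * b i := by
  intro n
  induction n with
  | zero =>
    intro I _ a
    classical
    refine ⟨I, inferInstance, fun i => a i 0, fun j i => if i = j then 1 else 0, ?_⟩
    intro b t
    constructor
    · rintro ⟨x, hx⟩ j
      have := hx j
      rw [sum_single]
      simp only [dot, Fin.sum_univ_one] at this
      simpa [Fin.snoc] using this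
    · intro h
      refine ⟨fun i => i.elim0, fun j => ?_⟩
      have := h j
      rw [sum_single] at this
      simp only [dot, Fin.sum_univ_one]
      simpa [Fin.snoc] using this
  | succ n ih =>
    intro I _ a
    obtain ⟨J, hJ, a', u, hfm⟩ := fm a
    obtain ⟨K, hK, α, v, hK2⟩ := ih a'
    refine ⟨K, hK, α, fun k i => ∑ j, v k j * u j i, ?_⟩
    intro b t
    have key : (∃ x : Fin (n+1) → ℝ, GFeas a b (Fin.snoc x t))
        ↔ ∃ x' : Fin n → ℝ, ∃ s, GFeas a b (Fin.cons s (Fin.snoc x' t)) := by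
      constructor
      · rintro ⟨x, hx⟩
        refine ⟨Fin.tail x, x 0, ?_⟩
        rwa [Fin.cons_snoc_eq_snoc_cons, Fin.cons_self_tail]
      · rintro ⟨x', s, hx⟩
        exact ⟨Fin.cons s x', by rwa [← Fin.cons_snoc_eq_snoc_cons]⟩
    rw [key]
    have step : ∀ x' : Fin n → ℝ, (∃ s, GFeas a b (Fin.cons s (Fin.snoc x' t)))
        ↔ GFeas a' (fun j => ∑ i, u j i * b i) (Fin.snoc x' t) := fun x' => hfm b _
    simp only [step]
    rw [hK2 (fun j => ∑ i, u j i * b i) t]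
    have : ∀ k, (∑ j, v k j * ∑ i, u j i * b i) = ∑ i, (∑ j, v k j * u j i) * b i := by
      intro k
      simp only [Finset.mul_sum, Finset.sum_mul]
      rw [Finset.sum_comm]
      exact Finset.sum_congr rfl fun i _ => Finset.sum_congr rfl fun j _ => by ring
    exact forall_congr' fun k => by rw [this k]

lemma dot_snoc {n : ℕ} (v : Fin n → ℝ) (r : ℝ) (x : Fin n → ℝ) (t : ℝ) :
    dot (Fin.snoc v r) (Fin.snoc x t) = dot v x + r * t := by
  simp [dot, Fin.sum_univ_castSucc]

/-- The set of levels `t` such that `∃ x` feasible with `⟨c,x⟩ ≤ t` is a finite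
intersection of half-lines, uniformly in `b`. -/
lemma lp_repr {n : ℕ} {I : Type} [Fintype I] (a : I → Fin n → ℝ) (c : Fin n → ℝ) :
    ∃ (K : Type) (_ : Fintype K) (α : K → ℝ) (w : K → I → ℝ),
      ∀ (b : I → ℝ) (t : ℝ),
        (∃ x, GFeas a b x ∧ dot c x ≤ t) ↔ ∀ k, α k * t ≤ ∑ i, w k i * b i := by
  obtain ⟨K, hK, α, u, hu⟩ := elimAll n
    (Sum.elim (fun i => Fin.snoc (a i) 0) (fun _ : Unit => Fin.snoc c (-1)))
  refine ⟨K, hK, α, fun k i => u k (Sum.inl i), ?_⟩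
  intro b t
  have hform : ∀ x : Fin n → ℝ,
      GFeas (Sum.elim (fun i => Fin.snoc (a i) 0) (fun _ : Unit => Fin.snoc c (-1)))
        (Sum.elim b (fun _ => 0)) (Fin.snoc x t) ↔ (GFeas a b x ∧ dot c x ≤ t) := by
    intro x
    constructor
    · intro h
      refine ⟨fun i => ?_, ?_⟩
      · have := h (Sum.inl i); rw [Sum.elim_inl, dot_snoc] at this; simpa using this
      · have := h (Sum.inr ()); rw [Sum.elim_inr, dot_snoc] at this
        simp only [Sum.elim_inr] at this; linarith
    · rintro ⟨h1, h2⟩ j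
      rcases j with i | _
      · rw [Sum.elim_inl, dot_snoc]; simpa using h1 i
      · rw [Sum.elim_inr, dot_snoc]; simp only [Sum.elim_inr]; linarith
  rw [show (∃ x, GFeas a b x ∧ dot c x ≤ t)
      ↔ ∃ x, GFeas (Sum.elim (fun i => Fin.snoc (a i) 0) (fun _ : Unit => Fin.snoc c (-1)))
          (Sum.elim b (fun _ => 0)) (Fin.snoc x t) from exists_congr fun x => (hform x).symm]
  rw [hu (Sum.elim b (fun _ => 0)) t]
  refine forall_congr' fun k => ?_
  rw [Fintype.sum_sum_type]
  simp

/-- Attainment: a linear objective bounded below on a nonempty "polyhedron"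
attains its minimum. -/
lemma lp_attain {n : ℕ} {I : Type} [Fintype I] (a : I → Fin n → ℝ) (b : I → ℝ)
    (c : Fin n → ℝ) (hne : ∃ x, GFeas a b x) (M : ℝ)
    (hbdd : ∀ x, GFeas a b x → M ≤ dot c x) :
    ∃ x, GFeas a b x ∧ ∀ y, GFeas a b y → dot c x ≤ dot c y := by
  obtain ⟨K, hK, α, w, hrep⟩ := lp_repr a c
  set T : Set ℝ := {t | ∀ k, α k * t ≤ ∑ i, w k i * b i} with hT
  have hmem : ∀ t, t ∈ T ↔ ∃ x, GFeas a b x ∧ dot c x ≤ t := fun t => (hrep b t).symm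
  have hclosed : IsClosed T := by
    have : T = ⋂ k, {t : ℝ | α k * t ≤ ∑ i, w k i * b i} := by ext; simp [hT]
    rw [this]
    exact isClosed_iInter fun k =>
      isClosed_le (continuous_const.mul continuous_id) continuous_const
  obtain ⟨x₀, hx₀⟩ := hne
  have hTne : T.Nonempty := ⟨dot c x₀, (hmem _).2 ⟨x₀, hx₀, le_refl _⟩⟩
  have hbb : BddBelow T := by
    refine ⟨M, fun t ht => ?_⟩
    obtain ⟨x, hx, hcx⟩ := (hmem t).1 ht
    exact le_trans (hbdd x hx) hcx
  have hinf : sInf T ∈ T := hclosed.csInf_mem hTne hbb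
  obtain ⟨x, hx, hcx⟩ := (hmem _).1 hinf
  refine ⟨x, hx, fun y hy => ?_⟩
  have : dot c y ∈ T := (hmem _).2 ⟨y, hy, le_refl _⟩
  exact le_trans hcx (csInf_le hbb this)

/-- Unboundedness yields a recession direction along which the objective decreases. -/
lemma lp_dir {n : ℕ} {I : Type} [Fintype I] (a : I → Fin n → ℝ) (b : I → ℝ)
    (c : Fin n → ℝ) (hsolv : ∀ t : ℝ, ∃ x, GFeas a b x ∧ dot c x ≤ t) :
    ∃ d, GFeas a (fun _ => 0) d ∧ dot c d ≤ -1 := by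
  obtain ⟨K, hK, α, w, hrep⟩ := lp_repr a c
  have hα : ∀ k, α k = 0 := by
    intro k
    by_contra h0
    have h1 := ((hrep b ((∑ i, w k i * b i + 1) / α k)).1 (hsolv _)) k
    rw [mul_div_cancel₀ _ h0] at h1
    linarith
  apply (hrep (fun _ => 0) (-1)).2
  intro k
  simp [hα k]

lemma dot_add_right {n : ℕ} (v x d : Fin n → ℝ) :
    dot v (fun i => x i + d i) = dot v x + dot v d := by
  simp [dot, mul_add, Finset.sum_add_distrib]

lemma dot_sumc {n q : ℕ} (c : Fin q → Fin n → ℝ) (x : Fin n → ℝ) :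
    dot (fun i => ∑ j, c j i) x = ∑ j, dot (c j) x := by
  simp only [dot, Finset.sum_mul]
  exact Finset.sum_comm


/-- Feasibility for the linear system `⟨aₜ, x⟩ ≤ bₜ`, `t = 1,…,m`. -/
def Feas {n m : ℕ} (a : Fin m → Fin n → ℝ) (b : Fin m → ℝ) (x : Fin n → ℝ) : Prop :=
  ∀ t, dot (a t) x ≤ b t

/-- Pareto-nondominated points of `F(b)` with respect to objectives `c₁,…,c_q`. -/
def Pareto {n m q : ℕ} (a : Fin m → Fin n → ℝ) (b : Fin m → ℝ)
    (c : Fin q → Fin n → ℝ) (x : Fin n → ℝ) : Prop :=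
  Feas a b x ∧ ¬ ∃ y, Feas a b y ∧ (∀ j, dot (c j) y ≤ dot (c j) x) ∧
    ∃ j, dot (c j) y < dot (c j) x

/-- If `S(b) ≠ ∅`, every feasible non-Pareto point is dominated
componentwise by some Pareto point. -/
theorem stmt3 {n m q : ℕ} (a : Fin m → Fin n → ℝ) (b : Fin m → ℝ)
    (c : Fin q → Fin n → ℝ) (hS : ∃ x, Pareto a b c x)
    (x₀ : Fin n → ℝ) (hfeas : Feas a b x₀) (hnot : ¬ Pareto a b c x₀) :
    ∃ xt, Pareto a b c xt ∧ ∀ j, dot (c j) xt ≤ dot (c j) x₀ := by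
  classical
  obtain ⟨xb, hxbF, hxbP⟩ := hS
  -- the combined constraint system (feasibility + domination constraints)
  -- no recession direction decreasing the total objective can exist
  have hnodir : ¬ ∃ d, GFeas (Sum.elim a c : (Fin m ⊕ Fin q) → Fin n → ℝ)
      (fun _ => 0) d ∧ dot (fun i => ∑ j, c j i) d ≤ -1 := by
    rintro ⟨d, hd, hcd⟩
    apply hxbP
    refine ⟨fun i => xb i + d i, fun t => ?_, fun j => ?_, ?_⟩
    · rw [dot_add_right]
      have h1 : dot (a t) d ≤ 0 := hd (Sum.inl t)
      linarith [hxbF t]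
    · rw [dot_add_right]
      have h1 : dot (c j) d ≤ 0 := hd (Sum.inr j)
      linarith
    · by_contra hall
      push_neg at hall
      have hnn : (0:ℝ) ≤ ∑ j, dot (c j) d := by
        refine Finset.sum_nonneg fun j _ => ?_
        have := hall j
        rw [dot_add_right] at this
        linarith
      rw [dot_sumc] at hcd
      linarith
  have hx₀D : GFeas (Sum.elim a c : (Fin m ⊕ Fin q) → Fin n → ℝ)
      (Sum.elim b (fun j => dot (c j) x₀)) x₀ := by
    rintro (t | j)
    · exact hfeas t
    · exact le_refl _
  have hbdd : ∃ M, ∀ x, GFeas (Sum.elim a c : (Fin m ⊕ Fin q) → Fin n → ℝ)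
      (Sum.elim b (fun j => dot (c j) x₀)) x → M ≤ dot (fun i => ∑ j, c j i) x := by
    by_contra h
    push_neg at h
    exact hnodir (lp_dir _ _ _ (fun t => (h t).imp fun x hx => ⟨hx.1, hx.2.le⟩))
  obtain ⟨M, hM⟩ := hbdd
  obtain ⟨xt, hxtD, hxtmin⟩ := lp_attain _ _ _ ⟨x₀, hx₀D⟩ M hM
  refine ⟨xt, ⟨fun t => hxtD (Sum.inl t), ?_⟩, fun j => hxtD (Sum.inr j)⟩
  rintro ⟨z, hzF, hzle, j0, hj0⟩
  have hzD : GFeas (Sum.elim a c : (Fin m ⊕ Fin q) → Fin n → ℝ)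
      (Sum.elim b (fun j => dot (c j) x₀)) z := by
    rintro (t | j)
    · exact hzF t
    · exact le_trans (hzle j) (hxtD (Sum.inr j))
  have h1 : dot (fun i => ∑ j, c j i) z < dot (fun i => ∑ j, c j i) xt := by
    rw [dot_sumc, dot_sumc]
    exact Finset.sum_lt_sum (fun j _ => hzle j) ⟨j0, Finset.mem_univ _, hj0⟩
  linarith [hxtmin z hzD]
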